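/- The group presented as ⟨a, b | a·b·a = b·a·b, a⁻¹·b·a²·b·a⁻² = 1⟩ (the trefoil knot group with the framing-1 longitude λ = caba⁻², c = a⁻¹ba, set equal to the identity) is isomorphic to the binary icosahedral group presented as ⟨A, B, C | A⁵ = B³ = C² = A·B·C⟩. -/
import Mathlib


/-- The relators of the presentation `⟨a, b | a·b·a = b·a·b, a⁻¹·b·a²·b·a⁻² = 1⟩`:
the trefoil knot group with the framing-1 longitude `λ = caba⁻²` (`c = a⁻¹ba`)
set equal to the identity. Generators: `a = of 0`, `b = of 1`. -/
def trefoilFramingOneRels : Set (FreeGroup (Fin 2)) :=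
  { (FreeGroup.of 0 * FreeGroup.of 1 * FreeGroup.of 0) *
      (FreeGroup.of 1 * FreeGroup.of 0 * FreeGroup.of 1)⁻¹,
    (FreeGroup.of 0)⁻¹ * FreeGroup.of 1 * FreeGroup.of 0 ^ 2 * FreeGroup.of 1 *
      (FreeGroup.of 0 ^ 2)⁻¹ }

/-- The relators of the presentation `⟨A, B, C | A⁵ = B³ = C² = A·B·C⟩` of the
binary icosahedral group `⟨5,3,2⟩`. Generators: `A = of 0`, `B = of 1`, `C = of 2`. -/
def binaryIcosahedralRels : Set (FreeGroup (Fin 3)) :=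
  { FreeGroup.of 0 ^ 5 * (FreeGroup.of 1 ^ 3)⁻¹,
    FreeGroup.of 1 ^ 3 * (FreeGroup.of 2 ^ 2)⁻¹,
    FreeGroup.of 2 ^ 2 * (FreeGroup.of 0 * FreeGroup.of 1 * FreeGroup.of 2)⁻¹ }

namespace TrefoilIcosaAux

/-- `a` in the trefoil presentation. -/
def a : PresentedGroup trefoilFramingOneRels := PresentedGroup.of 0
/-- `b` in the trefoil presentation. -/
def b : PresentedGroup trefoilFramingOneRels := PresentedGroup.of 1
/-- `A` in the binary icosahedral presentation. -/
def A : PresentedGroup binaryIcosahedralRels := PresentedGroup.of 0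
/-- `B` in the binary icosahedral presentation. -/
def B : PresentedGroup binaryIcosahedralRels := PresentedGroup.of 1
/-- `C` in the binary icosahedral presentation. -/
def C : PresentedGroup binaryIcosahedralRels := PresentedGroup.of 2

theorem rel_of_mem {α : Type} {rels : Set (FreeGroup α)} {r : FreeGroup α}
    (h : r ∈ rels) : PresentedGroup.mk rels r = 1 :=
  (QuotientGroup.eq_one_iff r).mpr (Subgroup.subset_normalClosure h)

/- Trefoil relations -/

theorem braid : a * b * a = b * a * b := by
  have h := rel_of_mem (Set.mem_insert _ _ :
    (FreeGroup.of 0 * FreeGroup.of 1 * FreeGroup.of 0) *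
      (FreeGroup.of 1 * FreeGroup.of 0 * FreeGroup.of 1)⁻¹ ∈ trefoilFramingOneRels)
  rw [map_mul, map_inv, map_mul, map_mul, map_mul, map_mul, mul_inv_eq_one] at h
  exact h

theorem long : b * a ^ 2 * b = a ^ 3 := by
  have h := rel_of_mem (Set.mem_insert_of_mem _ rfl :
    (FreeGroup.of 0)⁻¹ * FreeGroup.of 1 * FreeGroup.of 0 ^ 2 * FreeGroup.of 1 *
      (FreeGroup.of 0 ^ 2)⁻¹ ∈ trefoilFramingOneRels)
  simp only [map_mul, map_inv, map_pow] at h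
  have h' : a⁻¹ * b * a ^ 2 * b * (a ^ 2)⁻¹ = 1 := h
  calc b * a ^ 2 * b = a * (a⁻¹ * b * a ^ 2 * b * (a ^ 2)⁻¹) * a ^ 2 := by simp only [pow_succ, pow_zero, one_mul]; group
    _ = a * 1 * a ^ 2 := by rw [h']
    _ = a ^ 3 := by simp only [pow_succ, pow_zero, one_mul]; group

/- Binary icosahedral relations -/

theorem relI1 : A ^ 5 = B ^ 3 := by
  have h := rel_of_mem (Set.mem_insert _ _ :
    FreeGroup.of 0 ^ 5 * (FreeGroup.of 1 ^ 3)⁻¹ ∈ binaryIcosahedralRels)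
  simp only [map_mul, map_inv, map_pow] at h
  have h' : A ^ 5 * (B ^ 3)⁻¹ = 1 := h
  exact mul_inv_eq_one.mp h'

theorem relI2 : B ^ 3 = C ^ 2 := by
  have h := rel_of_mem (Set.mem_insert_of_mem _ (Set.mem_insert _ _) :
    FreeGroup.of 1 ^ 3 * (FreeGroup.of 2 ^ 2)⁻¹ ∈ binaryIcosahedralRels)
  simp only [map_mul, map_inv, map_pow] at h
  have h' : B ^ 3 * (C ^ 2)⁻¹ = 1 := h
  exact mul_inv_eq_one.mp h'

theorem relI3 : C ^ 2 = A * B * C := by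
  have h := rel_of_mem (Set.mem_insert_of_mem _ (Set.mem_insert_of_mem _ rfl) :
    FreeGroup.of 2 ^ 2 * (FreeGroup.of 0 * FreeGroup.of 1 * FreeGroup.of 2)⁻¹
      ∈ binaryIcosahedralRels)
  simp only [map_mul, map_inv, map_pow] at h
  have h' : C ^ 2 * (A * B * C)⁻¹ = 1 := h
  exact mul_inv_eq_one.mp h'

theorem C_eq : C = A * B := by
  have h : C * C = (A * B) * C := by
    have := relI3; rw [pow_two] at this; rw [this]
  exact mul_right_cancel h

theorem ABAB : A * B * (A * B) = A ^ 5 := by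
  calc A * B * (A * B) = C * C := by rw [← C_eq]
    _ = C ^ 2 := by rw [pow_two]
    _ = B ^ 3 := relI2.symm
    _ = A ^ 5 := relI1.symm

theorem ABA : A * B * A = B ^ 2 := by
  have h : A * B * A * B = B ^ 2 * B := by
    calc A * B * A * B = A * B * (A * B) := by group
      _ = A ^ 5 := ABAB
      _ = B ^ 3 := relI1
      _ = B ^ 2 * B := by simp only [pow_succ, pow_zero, one_mul]
  exact mul_right_cancel h

theorem BAB : B * A * B = A ^ 4 := by
  have h : A * (B * A * B) = A * A ^ 4 := by
    calc A * (B * A * B) = A * B * (A * B) := by group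
      _ = A ^ 5 := ABAB
      _ = A * A ^ 4 := by simp only [pow_succ, pow_zero, one_mul]; group
  exact mul_left_cancel h

/- Trefoil-side consequences -/

theorem a_pow5 : a ^ 5 = (b * a) ^ 3 := by
  calc a ^ 5 = a * a ^ 3 * a := by simp only [pow_succ, pow_zero, one_mul]; group
    _ = a * (b * a ^ 2 * b) * a := by rw [long]
    _ = (a * b * a) * (a * b * a) := by simp only [pow_succ, pow_zero, one_mul]; group
    _ = (b * a * b) * (a * b * a) := by rw [braid]
    _ = (b * a) ^ 3 := by simp only [pow_succ, pow_zero, one_mul]; group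

theorem ba_cubed : (b * a) ^ 3 = (a * b * a) ^ 2 := by
  calc (b * a) ^ 3 = (b * a * b) * (a * b * a) := by simp only [pow_succ, pow_zero, one_mul]; group
    _ = (a * b * a) * (a * b * a) := by rw [braid]
    _ = (a * b * a) ^ 2 := by simp only [pow_succ, pow_zero, one_mul]

/- The two homomorphisms -/

def fGen : Fin 2 → PresentedGroup binaryIcosahedralRels := ![A, B * A⁻¹]
def gGen : Fin 3 → PresentedGroup trefoilFramingOneRels := ![a, b * a, a * b * a]

theorem f_rels : ∀ r ∈ trefoilFramingOneRels, FreeGroup.lift fGen r = 1 := by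
  intro r hr
  rcases hr with h | h
  · subst h
    simp only [map_mul, map_inv, map_pow, FreeGroup.lift_apply_of, fGen]
    simp only [Matrix.cons_val_zero, Matrix.cons_val_one, Matrix.head_cons]
    rw [mul_inv_eq_one]
    calc A * (B * A⁻¹) * A = (A * B * A) * A⁻¹ := by group
      _ = B ^ 2 * A⁻¹ := by rw [ABA]
      _ = B * A⁻¹ * A * (B * A⁻¹) := by simp only [pow_succ, pow_zero, one_mul]; group
  · rw [Set.mem_singleton_iff] at h
    subst h
    simp only [map_mul, map_inv, map_pow, FreeGroup.lift_apply_of, fGen]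
    simp only [Matrix.cons_val_zero, Matrix.cons_val_one, Matrix.head_cons]
    have h4 : B * A * B = A ^ 4 := BAB
    calc A⁻¹ * (B * A⁻¹) * A ^ 2 * (B * A⁻¹) * (A ^ 2)⁻¹
        = A⁻¹ * (B * A * B) * A⁻¹ * (A ^ 2)⁻¹ := by simp only [pow_succ, pow_zero, one_mul]; group
      _ = A⁻¹ * A ^ 4 * A⁻¹ * (A ^ 2)⁻¹ := by rw [h4]
      _ = 1 := by simp only [pow_succ, pow_zero, one_mul]; group

theorem g_rels : ∀ r ∈ binaryIcosahedralRels, FreeGroup.lift gGen r = 1 := by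
  intro r hr
  rcases hr with h | h | h
  · subst h
    simp only [map_mul, map_inv, map_pow, FreeGroup.lift_apply_of, gGen]
    simp only [Matrix.cons_val_zero, Matrix.cons_val_one, Matrix.head_cons]
    rw [mul_inv_eq_one]
    exact a_pow5
  · subst h
    simp only [map_mul, map_inv, map_pow, FreeGroup.lift_apply_of, gGen]
    simp only [Matrix.cons_val_zero, Matrix.cons_val_one, Matrix.head_cons,
      Matrix.cons_val_two, Matrix.tail_cons]
    rw [mul_inv_eq_one]
    exact ba_cubed
  · rw [Set.mem_singleton_iff] at h
    subst h
    simp only [map_mul, map_inv, map_pow, FreeGroup.lift_apply_of, gGen]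
    simp only [Matrix.cons_val_zero, Matrix.cons_val_one, Matrix.head_cons,
      Matrix.cons_val_two, Matrix.tail_cons]
    rw [mul_inv_eq_one]
    simp only [pow_succ, pow_zero, one_mul]; group

def fHom : PresentedGroup trefoilFramingOneRels →* PresentedGroup binaryIcosahedralRels :=
  PresentedGroup.toGroup f_rels

def gHom : PresentedGroup binaryIcosahedralRels →* PresentedGroup trefoilFramingOneRels :=
  PresentedGroup.toGroup g_rels

theorem gf_id : gHom.comp fHom = MonoidHom.id _ := by
  ext x
  fin_cases x
  · show gHom (fHom a) = a
    have : fHom a = A := PresentedGroup.toGroup.of f_rels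
    rw [this]
    exact PresentedGroup.toGroup.of g_rels
  · show gHom (fHom b) = b
    have h1 : fHom b = B * A⁻¹ := PresentedGroup.toGroup.of f_rels
    have h2 : gHom B = b * a := PresentedGroup.toGroup.of g_rels
    have h3 : gHom A = a := PresentedGroup.toGroup.of g_rels
    rw [h1, map_mul, map_inv, h2, h3]
    group

theorem fg_id : fHom.comp gHom = MonoidHom.id _ := by
  ext x
  have hA : fHom a = A := PresentedGroup.toGroup.of f_rels
  have hB : fHom b = B * A⁻¹ := PresentedGroup.toGroup.of f_rels
  fin_cases x
  · show fHom (gHom A) = A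
    have : gHom A = a := PresentedGroup.toGroup.of g_rels
    rw [this, hA]
  · show fHom (gHom B) = B
    have : gHom B = b * a := PresentedGroup.toGroup.of g_rels
    rw [this, map_mul, hA, hB]
    group
  · show fHom (gHom C) = C
    have : gHom C = a * b * a := PresentedGroup.toGroup.of g_rels
    rw [this, map_mul, map_mul, hA, hB]
    rw [C_eq]
    group

end TrefoilIcosaAux

/-- The group `⟨a, b | a·b·a = b·a·b, a⁻¹·b·a²·b·a⁻² = 1⟩` (the trefoil knot group
with the framing-1 longitude collapsed, i.e. the fundamental group of the Poincaré
homology sphere) is isomorphic to the binary icosahedral group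
`⟨A, B, C | A⁵ = B³ = C² = A·B·C⟩`. -/
theorem trefoil_framing_one_iso_binary_icosahedral :
    Nonempty (PresentedGroup trefoilFramingOneRels ≃*
      PresentedGroup binaryIcosahedralRels) :=
  ⟨MonoidHom.toMulEquiv TrefoilIcosaAux.fHom TrefoilIcosaAux.gHom
    TrefoilIcosaAux.gf_id TrefoilIcosaAux.fg_id⟩
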